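/- Addition formula for noncommutative shifted factorials of type II with three parameters: Let A, B, C be elements of a unit ring R such that the element A+B−C commutes with each of A, B and C, and let n be a nonnegative integer. Then ⌊C−B+I, C−A+I; C, C−A−B⌉_n · (C−A+nI)^{−1}(C−B+nI)^{−1} − C^{−1}A(A+B−C+(1−n)I)^{−1}B(A+B−C−nI)^{−1}(A+B−C+I) · ⌊C−B+I, C−A+I; C+I, C−A−B−I⌉_n · (C−A+nI)^{−1}(C−B+nI)^{−1} = ⌊C−B+I, C−A+I; C, C−A−B⌉_{n+1} · (C−A+(n+1)I)^{−1}(C−B+(n+1)I)^{−1}. -/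

import Mathlib

/-- Ordered (noncommutative) product `f 0 * f 1 * ⋯ * f (n-1)`. -/
def opr {R : Type*} [Ring R] (n : ℕ) (f : ℕ → R) : R :=
  ((List.range n).map f).prod

section AuxAdditionTypeII
variable {R : Type*} [Ring R]

theorem opr_zero (f : ℕ → R) : opr 0 f = 1 := rfl

theorem opr_succ (n : ℕ) (f : ℕ → R) : opr (n+1) f = opr n f * f n := by
  simp [opr, List.range_succ]

theorem commute_ringInverse {a b : R} (h : Commute a b) (hb : IsUnit b) :
    Commute a (Ring.inverse b) := by
  obtain ⟨u, rfl⟩ := hb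
  rw [Ring.inverse_unit]
  exact h.units_inv_right

theorem commute_opr {a : R} {n : ℕ} {f : ℕ → R} (h : ∀ j, j < n → Commute a (f j)) :
    Commute a (opr n f) := by
  apply Commute.list_prod_right
  intro x hx
  simp only [List.mem_map, List.mem_range] at hx
  obtain ⟨j, hj, rfl⟩ := hx
  exact h j hj

theorem swap {a b : R} (h : Commute a b) (x : R) : a * (b * x) = b * (a * x) := by
  rw [← mul_assoc, h.eq, mul_assoc]

theorem ringInverse_neg (a : R) : Ring.inverse (-a) = -Ring.inverse a := by
  by_cases h : IsUnit a
  · obtain ⟨u, rfl⟩ := h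
    rw [← Units.val_neg, Ring.inverse_unit, Ring.inverse_unit, ← Units.val_neg, inv_neg]
  · have h2 : ¬ IsUnit (-a) := fun hh => h (by simpa using hh.neg)
    rw [Ring.inverse_non_unit _ h, Ring.inverse_non_unit _ h2, neg_zero]

theorem core (b c e : R) (heb : Commute e b) (hec : Commute e c)
    (hc : IsUnit c) (hc1 : IsUnit (c + 1)) (he : IsUnit e) (he1 : IsUnit (e + 1))
    (hem : IsUnit (e - 1)) :
    (1 - Ring.inverse e * (Ring.inverse c * ((c - b) * (b + e)))) *
      ((e - 1) * (Ring.inverse (e + 1) *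
        (Ring.inverse (c + 1) * ((c - b + 1) * (Ring.inverse (e - 1) * (b + e + 1))))))
    = Ring.inverse c * ((c - b + 1) * (Ring.inverse e * (b + e + 1))) *
      (1 - Ring.inverse (e + 1) * (Ring.inverse (c + 1) * ((c - b + 1) * (b + e + 1)))) := by
  -- commute facts
  have hbe : Commute b e := heb.symm
  have hce : Commute c e := hec.symm
  have c_em_b : Commute (e-1) b := heb.sub_left (Commute.one_left b)
  have c_em_c : Commute (e-1) c := hec.sub_left (Commute.one_left c)
  have c_e1_b : Commute (e+1) b := heb.add_left (Commute.one_left b)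
  have c_e1_c : Commute (e+1) c := hec.add_left (Commute.one_left c)
  have c_em_e1 : Commute (e-1) (e+1) :=
    ((Commute.refl e).add_right (Commute.one_right e)).sub_left (Commute.one_left (e+1))
  have c_em_c1 : Commute (e-1) (c+1) := c_em_c.add_right (Commute.one_right _)
  have c_e1_c1 : Commute (e+1) (c+1) := c_e1_c.add_right (Commute.one_right _)
  have c_em_cb1 : Commute (e-1) (c-b+1) :=
    (c_em_c.sub_right c_em_b).add_right (Commute.one_right _)
  have c_e_cb1 : Commute e (c-b+1) := (hec.sub_right heb).add_right (Commute.one_right _)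
  have c_e1_cb1 : Commute (e+1) (c-b+1) :=
    (c_e1_c.sub_right c_e1_b).add_right (Commute.one_right _)
  have c_e1_be1 : Commute (e+1) (b+e+1) :=
    (c_e1_b.add_right ((Commute.refl e).add_left (Commute.one_left e))).add_right
      (Commute.one_right _)
  have c_bce_e1 : Commute (b-c+e) (e+1) :=
    ((c_e1_b.symm.sub_left c_e1_c.symm)).add_left ((Commute.refl e).add_right (Commute.one_right e))
  -- inverse commute facts
  have i_em_ie1 : Commute (e-1) (Ring.inverse (e+1)) := commute_ringInverse c_em_e1 he1
  have i_em_ic1 : Commute (e-1) (Ring.inverse (c+1)) := commute_ringInverse c_em_c1 hc1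
  have i_b_ie1 : Commute b (Ring.inverse (e+1)) := commute_ringInverse c_e1_b.symm he1
  have i_bce_ie1 : Commute (b-c+e) (Ring.inverse (e+1)) := commute_ringInverse c_bce_e1 he1
  have i_ic_ie1 : Commute (Ring.inverse c) (Ring.inverse (e+1)) :=
    Commute.ringInverse_ringInverse c_e1_c.symm
  have i_ie_ie1 : Commute (Ring.inverse e) (Ring.inverse (e+1)) :=
    Commute.ringInverse_ringInverse ((Commute.refl e).add_right (Commute.one_right e))
  have i_ic_e : Commute (Ring.inverse c) e := (commute_ringInverse hec hc).symm
  have i_e1_ic1 : Commute (e+1) (Ring.inverse (c+1)) := commute_ringInverse c_e1_c1 hc1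
  have i_ic_e1 : Commute (Ring.inverse c) (e+1) := (commute_ringInverse c_e1_c hc).symm
  have i_ie_e1 : Commute (Ring.inverse e) (e+1) :=
    (commute_ringInverse ((Commute.refl e).add_right (Commute.one_right e)).symm he).symm
  have i_ie_ic : Commute (Ring.inverse e) (Ring.inverse c) :=
    Commute.ringInverse_ringInverse hec
  have i_ie_cb1 : Commute (Ring.inverse e) (c-b+1) := (commute_ringInverse c_e_cb1.symm he).symm
  have i_ie1_ie : Commute (Ring.inverse (e+1)) (Ring.inverse e) := i_ie_ie1.symm
  have i_ie1_ic : Commute (Ring.inverse (e+1)) (Ring.inverse c) := i_ic_ie1.symm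
  have i_ie1_cb1 : Commute (Ring.inverse (e+1)) (c-b+1) :=
    (commute_ringInverse c_e1_cb1.symm he1).symm
  have i_ie1_be1 : Commute (Ring.inverse (e+1)) (b+e+1) :=
    (commute_ringInverse c_e1_be1.symm he1).symm
  -- polynomial identities
  have hIdI : e*c - (c-b)*(b+e) = (b-c+e)*b := by
    simp only [mul_add, add_mul, sub_mul, mul_sub]
    rw [hec.eq, heb.eq]; abel
  have hIdII : (b-c+e)*b = (c+1)*(e+1) - (c-b+1)*(b+e+1) := by
    have : (b-c+e)*b + (c-b+1)*(b+e+1) = (c+1)*(e+1) := by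
      simp only [mul_add, add_mul, sub_mul, mul_sub, one_mul, mul_one]
      rw [heb.eq]; abel
    rw [← this]; abel
  -- step 1: 1 - E = ie * (ic * ((b-c+e)*b))
  have hb1 : Ring.inverse e * (Ring.inverse c * (e*c)) = 1 := by
    rw [swap i_ic_e c, Ring.inverse_mul_cancel_left e _ he, Ring.inverse_mul_cancel c hc]
  have hblock : (1:R) - Ring.inverse e * (Ring.inverse c * ((c-b)*(b+e)))
      = Ring.inverse e * (Ring.inverse c * ((b-c+e)*b)) := by
    rw [← hIdI, mul_sub, mul_sub, hb1]
  rw [hblock]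
  have key1 : Ring.inverse e * (Ring.inverse c * ((b - c + e) * b)) *
      ((e - 1) * (Ring.inverse (e + 1) *
        (Ring.inverse (c + 1) * ((c - b + 1) * (Ring.inverse (e - 1) * (b + e + 1))))))
      = Ring.inverse c * ((c - b + 1) * (Ring.inverse e * (b + e + 1))) -
        Ring.inverse c * ((c - b + 1) * (Ring.inverse e * ((b + e + 1) *
          (Ring.inverse (e + 1) * (Ring.inverse (c + 1) * ((c - b + 1) * (b + e + 1))))))) := by
    conv_lhs =>
      simp only [mul_assoc]
      rw [swap i_em_ie1, swap i_em_ic1, swap c_em_cb1, Ring.mul_inverse_cancel_left _ _ hem,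
        swap i_b_ie1, swap i_bce_ie1, swap i_ic_ie1, swap i_ie_ie1,
        ← mul_assoc (b-c+e) b, hIdII, sub_mul]
      simp only [mul_sub]
      simp only [mul_assoc]
      -- first summand
      rw [swap i_e1_ic1, Ring.mul_inverse_cancel_left (c+1) _ hc1,
        swap i_ic_e1, swap i_ie_e1, Ring.inverse_mul_cancel_left (e+1) _ he1,
        swap i_ie_ic, swap i_ie_cb1]
      -- second summand
      rw [swap i_ie1_ie, swap i_ie1_ic, swap i_ie1_cb1, swap i_ie1_be1,
        swap i_ie_ic, swap i_ie_cb1]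
  have key2 : Ring.inverse c * ((c - b + 1) * (Ring.inverse e * (b + e + 1))) *
      (1 - Ring.inverse (e + 1) * (Ring.inverse (c + 1) * ((c - b + 1) * (b + e + 1))))
      = Ring.inverse c * ((c - b + 1) * (Ring.inverse e * (b + e + 1))) -
        Ring.inverse c * ((c - b + 1) * (Ring.inverse e * ((b + e + 1) *
          (Ring.inverse (e + 1) * (Ring.inverse (c + 1) * ((c - b + 1) * (b + e + 1))))))) := by
    rw [mul_sub, mul_one]
    simp only [mul_assoc]
  rw [key1, key2]

theorem keyK (A B C : R)
    (hDA : (A + B - C) * A = A * (A + B - C))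
    (hDB : (A + B - C) * B = B * (A + B - C))
    (hDC : (A + B - C) * C = C * (A + B - C))
    (hCAB1 : IsUnit (C - A - B - 1)) :
    ∀ n : ℕ, (∀ m : ℕ, m ≤ n → IsUnit (C + (m : R))) →
    (∀ m : ℕ, m ≤ n → IsUnit (C - A - B + (m : R))) →
    Ring.inverse C * (A * (Ring.inverse (A+B-C+1-(n:R)) * (B * (Ring.inverse (A+B-C-(n:R)) *
      ((A+B-C+1) * opr n (fun j => Ring.inverse (C+1+(j:R)) *
        ((C-B+(j:R)+1) * (Ring.inverse (C-A-B-1+(j:R)) * (C-A+(j:R)+1))))))))) =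
    opr n (fun j => Ring.inverse (C+(j:R)) *
        ((C-B+(j:R)+1) * (Ring.inverse (C-A-B+(j:R)) * (C-A+(j:R)+1)))) *
      (1 - Ring.inverse (C-A-B+(n:R)) * (Ring.inverse (C+(n:R)) *
        ((C-B+(n:R)) * (C-A+(n:R))))) := by
  have cDA : Commute (A+B-C) A := hDA
  have cDB : Commute (A+B-C) B := hDB
  have cDC : Commute (A+B-C) C := hDC
  intro n
  induction n with
  | zero =>
    intro hC hCAB
    simp only [Nat.cast_zero, sub_zero, add_zero, opr_zero, mul_one, one_mul]
    -- units
    have hCu : IsUnit C := by simpa using hC 0 (le_refl 0)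
    have hNDu : IsUnit (C-A-B) := by simpa using hCAB 0 (le_refl 0)
    have hDu : IsUnit (A+B-C) := by
      have := hNDu.neg; rwa [show -(C-A-B) = A+B-C from by abel] at this
    have hD1u : IsUnit (A+B-C+1) := by
      have := hCAB1.neg; rwa [show -(C-A-B-1) = A+B-C+1 from by abel] at this
    -- identity III
    have h4 : A*B - C*B = B*A - B*C := by
      have h := hDB
      simp only [add_mul, sub_mul, mul_add, mul_sub] at h
      calc A*B - C*B = (A*B + B*B - C*B) - B*B := by abel
        _ = (B*A + B*B - B*C) - B*B := by rw [h]
        _ = B*A - B*C := by abel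
    have hIII : A*B = C*(A+B-C) + (C-B)*(C-A) := by
      calc A*B = (A*B - C*B) + C*B := by abel
        _ = (B*A - B*C) + C*B := by rw [h4]
        _ = C*(A+B-C) + (C-B)*(C-A) := by
            simp only [mul_add, mul_sub, sub_mul]; abel
    -- commutes
    have cD_D1 : Commute (A+B-C) (A+B-C+1) := (Commute.refl _).add_right (Commute.one_right _)
    have ciD_D1 : Commute (Ring.inverse (A+B-C)) (A+B-C+1) :=
      (commute_ringInverse cD_D1.symm hDu).symm
    have cB_D1 : Commute B (A+B-C+1) := cDB.symm.add_right (Commute.one_right B)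
    have cCA_iD : Commute (C-A) (Ring.inverse (A+B-C)) :=
      commute_ringInverse (cDC.symm.sub_left cDA.symm) hDu
    have cCB_iD : Commute (C-B) (Ring.inverse (A+B-C)) :=
      commute_ringInverse (cDC.symm.sub_left cDB.symm) hDu
    have ciC_iD : Commute (Ring.inverse C) (Ring.inverse (A+B-C)) :=
      Commute.ringInverse_ringInverse cDC.symm
    -- LHS
    rw [ciD_D1.eq, swap cB_D1, Ring.inverse_mul_cancel_left (A+B-C+1) _ hD1u]
    -- RHS
    rw [show C-A-B = -(A+B-C) from by abel, ringInverse_neg]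
    simp only [neg_mul, sub_neg_eq_add]
    calc Ring.inverse C * (A * (B * Ring.inverse (A+B-C)))
        = Ring.inverse C * ((A*B) * Ring.inverse (A+B-C)) := by rw [← mul_assoc A B]
      _ = Ring.inverse C * ((C*(A+B-C) + (C-B)*(C-A)) * Ring.inverse (A+B-C)) := by rw [hIII]
      _ = Ring.inverse C * ((C*(A+B-C)) * Ring.inverse (A+B-C)
            + ((C-B)*(C-A)) * Ring.inverse (A+B-C)) := by rw [add_mul]
      _ = Ring.inverse C * (C + (C-B)*((C-A) * Ring.inverse (A+B-C))) := by
            rw [mul_assoc C, Ring.mul_inverse_cancel _ hDu, mul_one, mul_assoc (C-B)]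
      _ = 1 + Ring.inverse C * ((C-B)*((C-A) * Ring.inverse (A+B-C))) := by
            rw [mul_add, Ring.inverse_mul_cancel _ hCu]
      _ = 1 + Ring.inverse (A+B-C) * (Ring.inverse C * ((C-B)*(C-A))) := by
            rw [cCA_iD.eq, swap cCB_iD, swap ciC_iD]
  | succ n IH =>
    intro hC hCAB
    have IH' := IH (fun m hm => hC m (le_trans hm (Nat.le_succ n)))
                   (fun m hm => hCAB m (le_trans hm (Nat.le_succ n)))
    -- units
    have hu_em : IsUnit (C-A-B+(n:R)-1) := by
      cases n with
      | zero => simpa using hCAB1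
      | succ m =>
          have h := hCAB m (by omega)
          rwa [show C-A-B+((m:ℕ):R) = C-A-B+(((m+1:ℕ)):R)-1 from by push_cast; abel] at h
    have hu_c : IsUnit (C+(n:R)) := hC n (Nat.le_succ n)
    have hu_c1 : IsUnit (C+(n:R)+1) := by
      have h := hC (n+1) (le_refl _)
      rwa [show C+(((n+1:ℕ)):R) = C+(n:R)+1 from by push_cast; abel] at h
    have hu_e : IsUnit (C-A-B+(n:R)) := hCAB n (Nat.le_succ n)
    have hu_e1 : IsUnit (C-A-B+(n:R)+1) := by
      have h := hCAB (n+1) (le_refl _)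
      rwa [show C-A-B+(((n+1:ℕ)):R) = C-A-B+(n:R)+1 from by push_cast; abel] at h
    have hu_j1 : IsUnit (A+B-C+1-(n:R)) := by
      have h := hu_em.neg
      rwa [show -(C-A-B+(n:R)-1) = A+B-C+1-(n:R) from by abel] at h
    have hu_i1 : IsUnit (A+B-C-(n:R)) := by
      have h := hu_e.neg
      rwa [show -(C-A-B+(n:R)) = A+B-C-(n:R) from by abel] at h
    have hu_i2 : IsUnit (A+B-C-(n:R)-1) := by
      have h := hu_e1.neg
      rwa [show -(C-A-B+(n:R)+1) = A+B-C-(n:R)-1 from by abel] at h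
    have hu_gdenom : ∀ j : ℕ, j < n+1 → IsUnit (C-A-B-1+(j:R)) := by
      intro j hj
      cases j with
      | zero => simpa using hCAB1
      | succ m =>
          have h := hCAB m (by omega)
          rwa [show C-A-B+((m:ℕ):R) = C-A-B-1+(((m+1:ℕ)):R) from by push_cast; abel] at h
    have hu_gc : ∀ j : ℕ, j < n+1 → IsUnit (C+1+(j:R)) := by
      intro j hj
      have h := hC (j+1) (by omega)
      rwa [show C+(((j+1:ℕ)):R) = C+1+(j:R) from by push_cast; abel] at h
    -- normalize casts and argument shapes in the goal
    simp only [Nat.cast_succ]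
    rw [opr_succ, opr_succ]
    rw [show A+B-C+1-((n:R)+1) = A+B-C-(n:R) from by abel,
        show A+B-C-((n:R)+1) = A+B-C-(n:R)-1 from by abel,
        show C-A-B+((n:R)+1) = C-A-B+(n:R)+1 from by abel,
        show C+((n:R)+1) = C+(n:R)+1 from by abel,
        show C-B+((n:R)+1) = C-B+(n:R)+1 from by abel,
        show C-A+((n:R)+1) = C-A+(n:R)+1 from by abel,
        show C+1+(n:R) = C+(n:R)+1 from by abel,
        show C-A-B-1+(n:R) = C-A-B+(n:R)-1 from by abel]
    set Q := opr n (fun j => Ring.inverse (C+1+(j:R)) *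
      ((C-B+(j:R)+1) * (Ring.inverse (C-A-B-1+(j:R)) * (C-A+(j:R)+1)))) with hQ
    set P := opr n (fun j => Ring.inverse (C+(j:R)) *
      ((C-B+(j:R)+1) * (Ring.inverse (C-A-B+(j:R)) * (C-A+(j:R)+1)))) with hP
    simp only [mul_assoc]
    -- commute machinery
    have mk1 : ∀ y : R, Commute (A+B-C) y → Commute (A+B-C+1-(n:R)) y := fun y h =>
      (h.add_left (Commute.one_left y)).sub_left (Nat.cast_commute n y)
    have mk2 : ∀ y : R, Commute (A+B-C) y → Commute (A+B-C-(n:R)) y := fun y h =>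
      h.sub_left (Nat.cast_commute n y)
    have mk3 : ∀ y : R, Commute (A+B-C) y → Commute (A+B-C-(n:R)-1) y := fun y h =>
      (h.sub_left (Nat.cast_commute n y)).sub_left (Commute.one_left y)
    have mk4 : ∀ y : R, Commute (A+B-C) y → Commute (A+B-C+1) y := fun y h =>
      h.add_left (Commute.one_left y)
    have tg1 : Commute (A+B-C) (A+B-C+1-(n:R)) :=
      ((Commute.refl _).add_right (Commute.one_right _)).sub_right (Nat.cast_commute n _).symm
    have tg2 : Commute (A+B-C) (A+B-C-(n:R)) :=
      (Commute.refl _).sub_right (Nat.cast_commute n _).symm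
    have tg3 : Commute (A+B-C) (A+B-C-(n:R)-1) := tg2.sub_right (Commute.one_right _)
    have tg4 : Commute (A+B-C) (A+B-C+1) := (Commute.refl _).add_right (Commute.one_right _)
    have tgQ : Commute (A+B-C) Q := by
      rw [hQ]
      apply commute_opr
      intro j hj
      exact Commute.mul_right
        (commute_ringInverse ((cDC.add_right (Commute.one_right _)).add_right
          (Nat.cast_commute j _).symm) (hu_gc j (by omega)))
        (Commute.mul_right
          (((cDC.sub_right cDB).add_right (Nat.cast_commute j _).symm).add_right
            (Commute.one_right _))
          (Commute.mul_right
            (commute_ringInverse ((((cDC.sub_right cDA).sub_right cDB).sub_right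
              (Commute.one_right _)).add_right (Nat.cast_commute j _).symm)
              (hu_gdenom j (by omega)))
            (((cDC.sub_right cDA).add_right (Nat.cast_commute j _).symm).add_right
              (Commute.one_right _))))
    have cm_i1 : Commute (A+B-C+1-(n:R)) (Ring.inverse (A+B-C-(n:R))) :=
      commute_ringInverse (mk1 _ tg2) hu_i1
    have cm_B : Commute (A+B-C+1-(n:R)) B := mk1 B cDB
    have cm_i2 : Commute (A+B-C+1-(n:R)) (Ring.inverse (A+B-C-(n:R)-1)) :=
      commute_ringInverse (mk1 _ tg3) hu_i2
    have cm_D1 : Commute (A+B-C+1-(n:R)) (A+B-C+1) := mk1 _ tg4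
    have cm_Q : Commute (A+B-C+1-(n:R)) Q := mk1 Q tgQ
    have ci1_B : Commute (Ring.inverse (A+B-C-(n:R))) B :=
      (commute_ringInverse (mk2 B cDB).symm hu_i1).symm
    have ci2_D1 : Commute (Ring.inverse (A+B-C-(n:R)-1)) (A+B-C+1) :=
      (commute_ringInverse (mk3 _ tg4).symm hu_i2).symm
    have ci2_Q : Commute (Ring.inverse (A+B-C-(n:R)-1)) Q :=
      (commute_ringInverse (mk3 Q tgQ).symm hu_i2).symm
    have ci2_m : Commute (Ring.inverse (A+B-C-(n:R)-1)) (A+B-C+1-(n:R)) :=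
      (commute_ringInverse (mk3 _ tg1).symm hu_i2).symm
    -- insert 1 = inverse(A+B-C+1-n) * (A+B-C+1-n)
    rw [show (Ring.inverse (A+B-C-(n:R)) : R) * (B * (Ring.inverse (A+B-C-(n:R)-1) *
          ((A+B-C+1) * (Q * (Ring.inverse (C+(n:R)+1) * ((C-B+(n:R)+1) *
            (Ring.inverse (C-A-B+(n:R)-1) * (C-A+(n:R)+1))))))))
        = Ring.inverse (A+B-C+1-(n:R)) * ((A+B-C+1-(n:R)) * (Ring.inverse (A+B-C-(n:R)) *
            (B * (Ring.inverse (A+B-C-(n:R)-1) * ((A+B-C+1) * (Q *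
              (Ring.inverse (C+(n:R)+1) * ((C-B+(n:R)+1) *
                (Ring.inverse (C-A-B+(n:R)-1) * (C-A+(n:R)+1))))))))))
        from (Ring.inverse_mul_cancel_left _ _ hu_j1).symm]
    rw [swap cm_i1, swap cm_B, swap ci1_B, swap cm_i2, swap cm_D1, swap cm_Q,
        swap ci2_D1, swap ci2_Q, swap ci2_m]
    have IH2 := congrArg (fun x : R => x * ((A+B-C+1-(n:R)) * (Ring.inverse (A+B-C-(n:R)-1) *
      (Ring.inverse (C+(n:R)+1) * ((C-B+(n:R)+1) *
        (Ring.inverse (C-A-B+(n:R)-1) * (C-A+(n:R)+1))))))) IH'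
    simp only [mul_assoc] at IH2
    rw [IH2]
    congr 1
    -- negation juggling
    rw [show A+B-C+1-(n:R) = -(C-A-B+(n:R)-1) from by abel,
        show A+B-C-(n:R)-1 = -(C-A-B+(n:R)+1) from by abel, ringInverse_neg]
    simp only [neg_mul, mul_neg, neg_neg]
    -- core identity
    have heb : Commute (C-A-B+(n:R)) B := by
      have h : Commute (-(A+B-C)+(n:R)) B := cDB.neg_left.add_left (Nat.cast_commute n B)
      rwa [show -(A+B-C)+(n:R) = C-A-B+(n:R) from by abel] at h
    have hec : Commute (C-A-B+(n:R)) (C+(n:R)) := by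
      have h : Commute (-(A+B-C)+(n:R)) (C+(n:R)) :=
        (cDC.neg_left.add_left (Nat.cast_commute n C)).add_right (Nat.cast_commute n _).symm
      rwa [show -(A+B-C)+(n:R) = C-A-B+(n:R) from by abel] at h
    have hcore := core B (C+(n:R)) (C-A-B+(n:R)) heb hec hu_c hu_c1 hu_e hu_e1 hu_em
    rw [show C+(n:R)-B = C-B+(n:R) from by abel,
        show B+(C-A-B+(n:R)) = C-A+(n:R) from by abel] at hcore
    simp only [mul_assoc] at hcore
    exact hcore

end AuxAdditionTypeII

/-- Addition formula for noncommutative shifted factorials of type II with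
three parameters (Lemma 3 of the paper, type II case). -/
theorem additionTypeII3 {R : Type*} [Ring R] (A B C : R) (n : ℕ)
    (hDA : (A + B - C) * A = A * (A + B - C))
    (hDB : (A + B - C) * B = B * (A + B - C))
    (hDC : (A + B - C) * C = C * (A + B - C))
    (hC : ∀ m : ℕ, m < n + 1 → IsUnit (C + (m : R)))
    (hCAB : ∀ m : ℕ, m < n + 1 → IsUnit (C - A - B + (m : R)))
    (hCAB1 : IsUnit (C - A - B - 1))
    (hD1 : IsUnit (A + B - C + 1 - (n : R)))
    (hD2 : IsUnit (A + B - C - (n : R)))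
    (hCAn : IsUnit (C - A + (n : R))) (hCBn : IsUnit (C - B + (n : R)))
    (hCAn1 : IsUnit (C - A + (n : R) + 1)) (hCBn1 : IsUnit (C - B + (n : R) + 1)) :
    opr n (fun j =>
        Ring.inverse (C + (j : R)) * (C - B + (j : R) + 1) *
        (Ring.inverse (C - A - B + (j : R)) * (C - A + (j : R) + 1))) *
        (Ring.inverse (C - A + (n : R)) * Ring.inverse (C - B + (n : R))) -
      Ring.inverse C * A * Ring.inverse (A + B - C + 1 - (n : R)) * B *
        Ring.inverse (A + B - C - (n : R)) * (A + B - C + 1) *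
        opr n (fun j =>
          Ring.inverse (C + 1 + (j : R)) * (C - B + (j : R) + 1) *
          (Ring.inverse (C - A - B - 1 + (j : R)) * (C - A + (j : R) + 1))) *
        (Ring.inverse (C - A + (n : R)) * Ring.inverse (C - B + (n : R))) =
    opr (n + 1) (fun j =>
      Ring.inverse (C + (j : R)) * (C - B + (j : R) + 1) *
      (Ring.inverse (C - A - B + (j : R)) * (C - A + (j : R) + 1))) *
      (Ring.inverse (C - A + (n : R) + 1) * Ring.inverse (C - B + (n : R) + 1)) := by
  simp only [mul_assoc]
  have hK := keyK A B C hDA hDB hDC hCAB1 n (fun m hm => hC m (by omega))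
    (fun m hm => hCAB m (by omega))
  have hK2 := congrArg
    (fun x : R => x * (Ring.inverse (C - A + (n:R)) * Ring.inverse (C - B + (n:R)))) hK
  simp only [mul_assoc] at hK2
  rw [hK2, opr_succ]
  simp only [mul_assoc]
  rw [← mul_sub]
  congr 1
  rw [sub_mul, one_mul, sub_sub_cancel]
  simp only [mul_assoc]
  rw [Ring.mul_inverse_cancel_left _ _ hCAn, Ring.mul_inverse_cancel _ hCBn, mul_one]
  -- now LHS = inverse (C-A-B+n) * inverse (C+n); simplify RHS
  rw [Ring.mul_inverse_cancel_left _ _ hCAn1]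
  have hec : Commute (C-A-B+(n:R)) (C+(n:R)) := by
    have cDC : Commute (A+B-C) C := hDC
    have h : Commute (-(A+B-C)+(n:R)) (C+(n:R)) :=
      (cDC.neg_left.add_left (Nat.cast_commute n C)).add_right (Nat.cast_commute n _).symm
    rwa [show -(A+B-C)+(n:R) = C-A-B+(n:R) from by abel] at h
  have hswap : Commute (C-B+(n:R)+1) (Ring.inverse (C-A-B+(n:R))) := by
    have cDB : Commute (A+B-C) B := hDB
    have cDC : Commute (A+B-C) C := hDC
    have h : Commute (-(A+B-C)+(n:R)) (C-B+(n:R)+1) :=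
      (((cDC.neg_left.add_left (Nat.cast_commute n C)).sub_right
        (cDB.neg_left.add_left (Nat.cast_commute n B))).add_right
        (Nat.cast_commute n _).symm).add_right (Commute.one_right _)
    rw [show -(A+B-C)+(n:R) = C-A-B+(n:R) from by abel] at h
    exact commute_ringInverse h.symm (hCAB n (by omega))
  rw [swap hswap, Ring.mul_inverse_cancel _ hCBn1, mul_one]
  exact (Commute.ringInverse_ringInverse hec).eq
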